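/- Let α > 0 and 0 < d < 1 be real numbers, and define the sequence k : ℕ → ℝ by k(1) = 1 and k(n+1) = k(n) + (α + d·k(n))/(α + n) for n ≥ 1. Then there exist constants c₁, c₂ > 0 such that c₁ · n^d ≤ k(n) ≤ c₂ · n^d for every n ≥ 1. -/

import Mathlib

open Real

/-- From Bernoulli: for `x > 0` and `0 < d < 1`, `(x+1)^d * x ≤ x^d * (x+d)`. -/
private lemma aux_lower {d : ℝ} (hd0 : 0 < d) (hd1 : d < 1) {x : ℝ} (hx : 0 < x) :
    (x + 1) ^ d * x ≤ x ^ d * (x + d) := by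
  have h1 : (0:ℝ) ≤ 1 + 1 / x := by positivity
  have hs : (-1:ℝ) ≤ 1 / x := by
    have : (0:ℝ) ≤ 1 / x := by positivity
    linarith
  have hb : (1 + 1 / x) ^ d ≤ 1 + d * (1 / x) :=
    rpow_one_add_le_one_add_mul_self hs hd0.le hd1.le
  have hx1 : x + 1 = x * (1 + 1 / x) := by field_simp
  have h2 : (x + 1) ^ d = x ^ d * (1 + 1 / x) ^ d := by
    rw [hx1, Real.mul_rpow hx.le h1]
  have hxd : (0:ℝ) ≤ x ^ d := Real.rpow_nonneg hx.le d
  have key : (1 + 1 / x) ^ d * x ≤ (1 + d * (1 / x)) * x :=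
    mul_le_mul_of_nonneg_right hb hx.le
  have e3 : (1 + d * (1 / x)) * x = x + d := by field_simp
  calc (x + 1) ^ d * x = x ^ d * ((1 + 1 / x) ^ d * x) := by rw [h2]; ring
    _ ≤ x ^ d * ((1 + d * (1 / x)) * x) := mul_le_mul_of_nonneg_left key hxd
    _ = x ^ d * (x + d) := by rw [e3]

/-- From Bernoulli: for `y > 0` and `0 < d < 1`, `(y+1+d) * y^d ≤ (y+1) * (y+1)^d`. -/
private lemma aux_upper {d : ℝ} (hd0 : 0 < d) (hd1 : d < 1) {y : ℝ} (hy : 0 < y) :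
    (y + 1 + d) * y ^ d ≤ (y + 1) * (y + 1) ^ d := by
  have hy1 : (0:ℝ) < y + 1 := by linarith
  have hle : 1 / (y + 1) ≤ 1 := by rw [div_le_one hy1]; linarith
  have hq0 : (0:ℝ) ≤ 1 - 1 / (y + 1) := by linarith
  have hs : (-1:ℝ) ≤ -(1 / (y + 1)) := by
    have : (0:ℝ) ≤ 1 / (y + 1) := by positivity
    linarith
  have hb : (1 + -(1 / (y + 1))) ^ d ≤ 1 + d * -(1 / (y + 1)) :=
    rpow_one_add_le_one_add_mul_self hs hd0.le hd1.le
  have hb' : (1 - 1 / (y + 1)) ^ d ≤ 1 - d * (1 / (y + 1)) := by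
    have e : 1 + -(1 / (y + 1)) = 1 - 1 / (y + 1) := by ring
    have e' : 1 + d * -(1 / (y + 1)) = 1 - d * (1 / (y + 1)) := by ring
    rw [e, e'] at hb; exact hb
  have hyy : y = (y + 1) * (1 - 1 / (y + 1)) := by field_simp; ring
  have h2 : y ^ d = (y + 1) ^ d * (1 - 1 / (y + 1)) ^ d := by
    conv_lhs => rw [hyy]
    rw [Real.mul_rpow hy1.le hq0]
  have hB : (0:ℝ) ≤ (y + 1) ^ d := Real.rpow_nonneg hy1.le d
  have hq : (y + 1 + d) * (1 - d * (1 / (y + 1))) ≤ y + 1 := by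
    have e : (y + 1 + d) * (1 - d * (1 / (y + 1))) = (y + 1 + d) * (y + 1 - d) / (y + 1) := by
      field_simp
    rw [e, div_le_iff₀ hy1]
    nlinarith [sq_nonneg d]
  calc (y + 1 + d) * y ^ d = (y + 1) ^ d * ((y + 1 + d) * (1 - 1 / (y + 1)) ^ d) := by
        rw [h2]; ring
    _ ≤ (y + 1) ^ d * ((y + 1 + d) * (1 - d * (1 / (y + 1)))) := by
        apply mul_le_mul_of_nonneg_left _ hB
        exact mul_le_mul_of_nonneg_left hb' (by linarith)
    _ ≤ (y + 1) ^ d * (y + 1) := mul_le_mul_of_nonneg_left hq hB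
    _ = (y + 1) * (y + 1) ^ d := by ring

/-- Power-law growth of the expected number of clusters for the Pitman-Yor
process: if `k 1 = 1` and `k (n+1) = k n + (α + d * k n)/(α + n)` for `n ≥ 1`,
then `k n` is bounded above and below by constant multiples of `n^d`. -/
theorem pitman_yor_expected_clusters_power_law
    (α d : ℝ) (hα : 0 < α) (hd0 : 0 < d) (hd1 : d < 1)
    (k : ℕ → ℝ) (hk1 : k 1 = 1)
    (hrec : ∀ n : ℕ, 1 ≤ n → k (n + 1) = k n + (α + d * k n) / (α + n)) :
    ∃ c₁ : ℝ, 0 < c₁ ∧ ∃ c₂ : ℝ, 0 < c₂ ∧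
      ∀ n : ℕ, 1 ≤ n → c₁ * (n : ℝ) ^ d ≤ k n ∧ k n ≤ c₂ * (n : ℝ) ^ d := by
  have hα1 : (0:ℝ) < α + 1 := by linarith
  have hA : (0:ℝ) < (α + 1) ^ d := Real.rpow_pos_of_pos hα1 d
  have hαd : (0:ℝ) < α ^ d := Real.rpow_pos_of_pos hα d
  -- lower bound claim
  have low : ∀ n : ℕ, 1 ≤ n → (α + n) ^ d ≤ (α + 1) ^ d * k n := by
    intro n hn
    induction n, hn using Nat.le_induction with
    | base => simp [hk1]
    | succ n hn ih =>
      have hn1 : (1:ℝ) ≤ n := by exact_mod_cast hn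
      have hx : (0:ℝ) < α + n := by linarith
      set x : ℝ := α + n with hxdef
      have hrw : (α + ((n + 1 : ℕ) : ℝ)) = x + 1 := by push_cast; ring
      rw [hrw, hrec n hn]
      have h1 : (x + 1) ^ d * x ≤ x ^ d * (x + d) := aux_lower hd0 hd1 hx
      have h2 : x ^ d * (x + d) ≤ (α + 1) ^ d * k n * (x + d) :=
        mul_le_mul_of_nonneg_right ih (by linarith)
      have h4 : (k n + (α + d * k n) / x) * x = k n * (x + d) + α := by
        field_simp; ring
      have h3 : (x + 1) ^ d * x ≤ ((α + 1) ^ d * (k n + (α + d * k n) / x)) * x := by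
        rw [mul_assoc, h4]
        nlinarith
      exact le_of_mul_le_mul_right h3 hx
  -- upper bound claim
  have hd' : d ≠ 0 := ne_of_gt hd0
  have up : ∀ n : ℕ, 1 ≤ n →
      (k n + α / d) * α ^ d ≤ (1 + α / d) * ((n : ℝ) + α - 1) ^ d := by
    intro n hn
    induction n, hn using Nat.le_induction with
    | base =>
      have e : ((1:ℕ) : ℝ) + α - 1 = α := by push_cast; ring
      rw [e, hk1]
    | succ n hn ih =>
      have hn1 : (1:ℝ) ≤ n := by exact_mod_cast hn
      set y : ℝ := (n : ℝ) + α - 1 with hydef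
      have hy : (0:ℝ) < y := by simp only [hydef]; linarith
      have hy1 : (0:ℝ) < y + 1 := by linarith
      have hxy : (α + (n:ℝ)) = y + 1 := by simp only [hydef]; ring
      have hrw : ((n + 1 : ℕ) : ℝ) + α - 1 = y + 1 := by
        push_cast; simp only [hydef]; ring
      rw [hrw, hrec n hn, hxy]
      have halg : k n + (α + d * k n) / (y + 1) + α / d
          = (k n + α / d) * ((y + 1 + d) / (y + 1)) := by
        field_simp
        ring
      rw [halg]
      have hfac : (0:ℝ) ≤ (y + 1 + d) / (y + 1) := by positivity
      have h1 : (k n + α / d) * ((y + 1 + d) / (y + 1)) * α ^ d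
          ≤ (1 + α / d) * y ^ d * ((y + 1 + d) / (y + 1)) := by
        calc (k n + α / d) * ((y + 1 + d) / (y + 1)) * α ^ d
            = (k n + α / d) * α ^ d * ((y + 1 + d) / (y + 1)) := by ring
          _ ≤ (1 + α / d) * y ^ d * ((y + 1 + d) / (y + 1)) :=
              mul_le_mul_of_nonneg_right ih hfac
      refine h1.trans ?_
      have hkey : (y + 1 + d) * y ^ d ≤ (y + 1) * (y + 1) ^ d := aux_upper hd0 hd1 hy
      have hc : (0:ℝ) ≤ 1 + α / d := by positivity
      calc (1 + α / d) * y ^ d * ((y + 1 + d) / (y + 1))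
          = (1 + α / d) * ((y + 1 + d) * y ^ d) / (y + 1) := by ring
        _ ≤ (1 + α / d) * ((y + 1) * (y + 1) ^ d) / (y + 1) := by
            gcongr
        _ = (1 + α / d) * (y + 1) ^ d := by
            rw [mul_comm (y + 1) ((y + 1) ^ d), ← mul_assoc, mul_div_assoc,
              div_self (ne_of_gt hy1), mul_one]
  -- assemble
  refine ⟨((α + 1) ^ d)⁻¹, by positivity, (1 + α / d) * (α + 1) ^ d / α ^ d, by positivity,
    fun n hn => ?_⟩
  have hn1 : (1:ℝ) ≤ n := by exact_mod_cast hn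
  have hnpos : (0:ℝ) < n := by linarith
  constructor
  · -- lower bound
    have h : ((n:ℝ)) ^ d ≤ (α + 1) ^ d * k n :=
      le_trans (Real.rpow_le_rpow hnpos.le (by linarith) hd0.le) (low n hn)
    calc ((α + 1) ^ d)⁻¹ * (n:ℝ) ^ d
        ≤ ((α + 1) ^ d)⁻¹ * ((α + 1) ^ d * k n) :=
          mul_le_mul_of_nonneg_left h (by positivity)
      _ = k n := by field_simp
  · -- upper bound
    have h := up n hn
    have hb1 : (0:ℝ) ≤ (n:ℝ) + α - 1 := by linarith
    have hmono : ((n:ℝ) + α - 1) ^ d ≤ ((α + 1) * n) ^ d := by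
      apply Real.rpow_le_rpow hb1 _ hd0.le
      nlinarith
    have hsplit : ((α + 1) * (n:ℝ)) ^ d = (α + 1) ^ d * (n:ℝ) ^ d :=
      Real.mul_rpow hα1.le hnpos.le
    have hk_le : k n * α ^ d ≤ (1 + α / d) * ((n:ℝ) + α - 1) ^ d := by
      have h0 : (0:ℝ) ≤ α / d := by positivity
      nlinarith
    rw [div_mul_eq_mul_div, le_div_iff₀ hαd]
    calc k n * α ^ d ≤ (1 + α / d) * ((n:ℝ) + α - 1) ^ d := hk_le
      _ ≤ (1 + α / d) * ((α + 1) ^ d * (n:ℝ) ^ d) := by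
          rw [← hsplit]
          exact mul_le_mul_of_nonneg_left hmono (by positivity)
      _ = (1 + α / d) * (α + 1) ^ d * (n:ℝ) ^ d := by ring
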